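/- Let (X,G,Φ) be an equicontinuous Cantor minimal system with Ellis group Ḡ, let x ∈ X, and suppose the normalizer N̂(Ḡ_x) of the isotropy subgroup Ḡ_x has finite index in Ḡ. Then every orbit of the action of Aut(X,G,Φ) on X is a closed and open subset of X. -/

import Mathlib

namespace CantorChains

variable {X : Type*} [TopologicalSpace X]

/-- The group of self-homeomorphisms of `X`, with composition as multiplication. -/
instance : Group (X ≃ₜ X) where
  mul f g := g.trans f
  one := Homeomorph.refl X
  inv := Homeomorph.symm
  mul_assoc _ _ _ := Homeomorph.ext fun _ => rfl
  one_mul _ := Homeomorph.ext fun _ => rfl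
  mul_one _ := Homeomorph.ext fun _ => rfl
  inv_mul_cancel f := Homeomorph.ext fun x => f.symm_apply_apply x

@[simp] lemma homeo_mul_apply (f g : X ≃ₜ X) (x : X) : (f * g) x = f (g x) := rfl
@[simp] lemma homeo_one_apply (x : X) : (1 : X ≃ₜ X) x = x := rfl

/-- The compact-open topology on the group of homeomorphisms (for a compact
metric space this is the topology of uniform convergence). -/
instance : TopologicalSpace (X ≃ₜ X) :=
  TopologicalSpace.induced (fun h : X ≃ₜ X => (h : C(X, X))) inferInstance

/-- The tautological action of the homeomorphism group of `X` on `X`. -/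
instance : MulAction (X ≃ₜ X) X where
  smul h x := h x
  one_smul _ := rfl
  mul_smul _ _ _ := rfl

@[simp] lemma homeo_smul_def (h : X ≃ₜ X) (x : X) : h • x = h x := rfl

variable {G : Type*} [Group G]

/-- The group of automorphisms of the action `Φ`: the homeomorphisms of `X`
commuting with every `Φ g`. -/
def autGroup (Φ : G →* (X ≃ₜ X)) : Subgroup (X ≃ₜ X) where
  carrier := {h | ∀ (g : G) (y : X), h (Φ g y) = Φ g (h y)}
  one_mem' := fun _ _ => rfl
  mul_mem' := fun {a b} ha hb g y => by
    show a (b (Φ g y)) = Φ g (a (b y))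
    rw [hb, ha]
  inv_mem' := fun {a} ha g y => by
    apply a.injective
    show a (a.symm (Φ g y)) = a (Φ g (a.symm y))
    rw [a.apply_symm_apply, ha, a.apply_symm_apply]

end CantorChains

namespace CantorChains

open Topology

section Aux

variable {G X : Type*} [Group G] [MetricSpace X] [CompactSpace X]

omit [CompactSpace X] in
lemma isEmbedding_coeC : IsEmbedding (fun h : X ≃ₜ X => (h : C(X, X))) := by
  refine ⟨⟨rfl⟩, fun a b hab => Homeomorph.ext fun z => ?_⟩
  have := DFunLike.congr_fun hab z
  simpa using this

omit [CompactSpace X] in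
lemma continuous_coeC : Continuous (fun h : X ≃ₜ X => (h : C(X, X))) := by
  rw [continuous_iff_le_induced]
  exact le_of_eq rfl

lemma compact_E (Φ : G →* (X ≃ₜ X))
    (heq : ∀ ε > 0, ∃ δ > 0, ∀ (g : G) (y z : X), dist y z < δ → dist (Φ g y) (Φ g z) < ε)
    (E : Subgroup (X ≃ₜ X))
    (hE : (E : Set (X ≃ₜ X)) = closure (Set.range fun g : G => Φ g)) :
    IsCompact (E : Set (X ≃ₜ X)) := by
  set ι : (X ≃ₜ X) → C(X, X) := fun h => (h : C(X, X)) with hι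
  set F : G → C(X, X) := fun g => ((Φ g : X ≃ₜ X) : C(X, X)) with hF
  set K : Set C(X, X) := closure (Set.range F) with hK
  -- compactness of K via Arzelà–Ascoli
  have hKc : IsCompact K := by
    set e := ContinuousMap.isometryEquivBoundedOfCompact X X with he
    have hA : IsCompact (closure (Set.range fun g : G => e (F g))) := by
      apply BoundedContinuousFunction.arzela_ascoli (Set.univ : Set X) isCompact_univ
      · intro f z hf; exact Set.mem_univ _
      · apply UniformEquicontinuous.equicontinuous
        rw [Metric.uniformEquicontinuous_iff]
        intro ε hε
        obtain ⟨δ, hδ, hδ2⟩ := heq ε hε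
        refine ⟨δ, hδ, fun u v huv i => ?_⟩
        obtain ⟨g, hg⟩ := i.2
        have hcoe : ((i : BoundedContinuousFunction X X) : X → X) = ⇑(Φ g) := by
          rw [← hg]; rfl
        show dist ((i : BoundedContinuousFunction X X) u)
          ((i : BoundedContinuousFunction X X) v) < ε
        rw [hcoe]
        exact hδ2 g u v huv
    have h1 : IsCompact (⇑e.toHomeomorph '' K) := by
      rw [hK, Homeomorph.image_closure]
      have h2 : ⇑e.toHomeomorph '' Set.range F = Set.range fun g : G => e (F g) := by
        rw [← Set.range_comp]; rfl
      rw [h2]; exact hA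
    exact e.toHomeomorph.isEmbedding.isCompact_iff.mpr h1
  -- every element of K is injective
  have hinj : ∀ f ∈ K, Function.Injective f := by
    intro f hf y z hyz
    by_contra hne
    obtain ⟨δ, hδ, hδ2⟩ := heq (dist y z) (dist_pos.2 hne)
    have key : ∀ g : G, δ ≤ dist (Φ g y) (Φ g z) := by
      intro g
      by_contra hlt
      push_neg at hlt
      have h2 := hδ2 g⁻¹ (Φ g y) (Φ g z) hlt
      have e1 : Φ g⁻¹ (Φ g y) = y := by
        rw [← homeo_mul_apply, ← map_mul, inv_mul_cancel, map_one, homeo_one_apply]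
      have e2 : Φ g⁻¹ (Φ g z) = z := by
        rw [← homeo_mul_apply, ← map_mul, inv_mul_cancel, map_one, homeo_one_apply]
      rw [e1, e2] at h2
      exact lt_irrefl _ h2
    obtain ⟨b, ⟨g, rfl⟩, hb⟩ := Metric.mem_closure_iff.1 hf (δ / 2) (by positivity)
    have hby := ContinuousMap.dist_apply_le_dist (f := f) (g := F g) y
    have hbz := ContinuousMap.dist_apply_le_dist (f := f) (g := F g) z
    have hlt : dist (Φ g y) (Φ g z) < δ := by
      have h4 := dist_triangle ((F g) y) (f y) ((F g) z)
      have h5 : dist (f y) ((F g) z) = dist (f z) ((F g) z) := by rw [hyz]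
      rw [h5] at h4
      have hby' : dist ((F g) y) (f y) ≤ dist f (F g) := by
        rw [dist_comm ((F g) y) (f y)]; exact hby
      calc dist (Φ g y) (Φ g z) = dist ((F g) y) ((F g) z) := rfl
        _ ≤ dist ((F g) y) (f y) + dist (f z) ((F g) z) := h4
        _ ≤ dist f (F g) + dist f (F g) := add_le_add hby' hbz
        _ < δ / 2 + δ / 2 := add_lt_add hb hb
        _ = δ := by ring
    exact absurd hlt (not_lt.2 (key g))
  -- every element of K is surjective
  have hsurj : ∀ f ∈ K, Function.Surjective f := by
    intro f hf w
    have hcl : IsClosed (Set.range f) := (isCompact_range f.continuous).isClosed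
    have hw : w ∈ closure (Set.range f) := by
      rw [Metric.mem_closure_iff]
      intro ε hε
      obtain ⟨b, ⟨g, rfl⟩, hb⟩ := Metric.mem_closure_iff.1 hf ε hε
      refine ⟨f (Φ g⁻¹ w), Set.mem_range_self _, ?_⟩
      have e1 : (F g) (Φ g⁻¹ w) = w := by
        show Φ g (Φ g⁻¹ w) = w
        rw [← homeo_mul_apply, ← map_mul, mul_inv_cancel, map_one, homeo_one_apply]
      have h2 := ContinuousMap.dist_apply_le_dist (f := f) (g := F g) (Φ g⁻¹ w)
      rw [e1] at h2
      rw [dist_comm]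
      exact lt_of_le_of_lt h2 hb
    rw [hcl.closure_eq] at hw
    exact hw
  -- K consists of homeomorphisms
  have hKr : K ⊆ Set.range ι := by
    intro f hf
    let e3 : X ≃ X := Equiv.ofBijective f ⟨hinj f hf, hsurj f hf⟩
    have hc : Continuous ⇑e3 := f.continuous
    refine ⟨hc.homeoOfEquivCompactToT2, ?_⟩
    show ((hc.homeoOfEquivCompactToT2 : X ≃ₜ X) : C(X, X)) = f
    exact ContinuousMap.ext fun z => rfl
  -- conclude
  have hemb : IsEmbedding ι := isEmbedding_coeC
  rw [hemb.isCompact_iff]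
  have h5 : ι '' (E : Set (X ≃ₜ X)) = K := by
    rw [hE, hemb.closure_eq_preimage_closure_image, Set.image_preimage_eq_inter_range]
    have h6 : ι '' Set.range (fun g : G => Φ g) = Set.range F := by
      rw [← Set.range_comp]; rfl
    rw [h6, ← hK]
    exact Set.inter_eq_left.2 hKr
  rw [h5]; exact hKc

end Aux

/-- For an equicontinuous Cantor minimal system, if the normalizer
`N̂(Ḡ_x)` of the isotropy group has finite index in the Ellis group `Ḡ`, then every
orbit of `Aut(X,G,Φ)` on `X` is a clopen subset of `X`. -/
theorem aut_orbits_clopen {G X : Type*} [Group G] [MetricSpace X]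
    [CompactSpace X] [TotallyDisconnectedSpace X] [PerfectSpace X] [Nonempty X]
    (Φ : G →* (X ≃ₜ X))
    (hmin : ∀ y : X, Dense (Set.range fun g : G => Φ g y))
    (heq : ∀ ε > 0, ∃ δ > 0, ∀ (g : G) (y z : X), dist y z < δ → dist (Φ g y) (Φ g z) < ε)
    (E : Subgroup (X ≃ₜ X))
    (hE : (E : Set (X ≃ₜ X)) = closure (Set.range fun g : G => Φ g))
    (x : X)
    (hfi : (Subgroup.normalizer (MulAction.stabilizer ↥E x : Set ↥E)).FiniteIndex) :
    ∀ y : X, IsClopen (MulAction.orbit ↥(autGroup Φ) y) := by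
  classical
  set H := MulAction.stabilizer (↥E) x with hHdef
  set N := Subgroup.normalizer (H : Set ↥E) with hNdef
  haveI hT2 : T2Space (X ≃ₜ X) := isEmbedding_coeC.t2Space
  have hcE : IsCompact (E : Set (X ≃ₜ X)) := compact_E Φ heq E hE
  haveI : CompactSpace ↥E := isCompact_iff_compactSpace.1 hcE
  -- continuity of evaluation
  have hcoeC : Continuous (fun g : ↥E => ((g : X ≃ₜ X) : C(X, X))) :=
    continuous_coeC.comp continuous_subtype_val
  have hev : ∀ z : X, Continuous (fun g : ↥E => (g : X ≃ₜ X) z) := by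
    intro z
    have h2 : Continuous (fun f : C(X, X) => f z) := continuous_eval_const z
    exact h2.comp hcoeC
  have hev0 : ∀ z : X, Continuous (fun h : X ≃ₜ X => h z) := by
    intro z
    have h2 : Continuous (fun f : C(X, X) => f z) := continuous_eval_const z
    exact h2.comp continuous_coeC
  -- membership bridge
  have hmemH : ∀ g : ↥E, g ∈ H ↔ (g : X ≃ₜ X) x = x := fun g => Iff.rfl
  -- range of Φ is in E
  have hΦE : ∀ g : G, Φ g ∈ E := fun g => by
    rw [← SetLike.mem_coe, hE]; exact subset_closure ⟨g, rfl⟩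
  -- transitivity
  set π : ↥E → X := fun g => (g : X ≃ₜ X) x with hπdef
  have hπc : Continuous π := hev x
  have hπsurj : Function.Surjective π := by
    have h1 : IsClosed (Set.range π) := (isCompact_range hπc).isClosed
    have h2 : Dense (Set.range π) := by
      refine Dense.mono ?_ (hmin x)
      rintro _ ⟨g, rfl⟩
      exact ⟨⟨Φ g, hΦE g⟩, rfl⟩
    rw [← Set.range_eq_univ, ← h1.closure_eq, h2.closure_eq]
  have htrans : ∀ y : X, ∃ g : ↥E, (g : X ≃ₜ X) x = y := hπsurj
  choose σ hσ using htrans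
  -- continuity of g ↦ g⁻¹ x
  have hscont : Continuous (fun g : ↥E => (g : X ≃ₜ X).symm x) := by
    set K : Set (↥E × X) := {p | (p.1 : X ≃ₜ X) p.2 = x} with hKdef
    have hKcl : IsClosed K := by
      have hc : Continuous (fun p : ↥E × X => (p.1 : X ≃ₜ X) p.2) := by
        have h1 : Continuous (fun p : ↥E × X =>
            ((((p.1 : X ≃ₜ X) : C(X, X))), p.2)) :=
          (hcoeC.comp continuous_fst).prodMk continuous_snd
        exact continuous_eval.comp h1
      exact isClosed_eq hc continuous_const
    haveI : CompactSpace ↥K := isCompact_iff_compactSpace.1 hKcl.isCompact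
    let e : ↥K ≃ ↥E :=
      { toFun := fun p => p.1.1
        invFun := fun g => ⟨(g, (g : X ≃ₜ X).symm x), by
          show (g : X ≃ₜ X) ((g : X ≃ₜ X).symm x) = x
          exact (g : X ≃ₜ X).apply_symm_apply x⟩
        left_inv := fun p => by
          have h2 : (p.1.1 : X ≃ₜ X) p.1.2 = x := p.2
          have h3 : (p.1.1 : X ≃ₜ X).symm x = p.1.2 := by
            apply (p.1.1 : X ≃ₜ X).injective
            rw [Homeomorph.apply_symm_apply]
            exact h2.symm
          apply Subtype.ext
          show ((p.1.1, (p.1.1 : X ≃ₜ X).symm x) : ↥E × X) = p.1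
          rw [h3]
        right_inv := fun g => rfl }
    have hec : Continuous ⇑e := continuous_fst.comp continuous_subtype_val
    let eh : ↥K ≃ₜ ↥E := hec.homeoOfEquivCompactToT2
    have hehap : ∀ k : ↥K, eh k = (k : ↥E × X).1 := fun k => rfl
    have hid : (fun g : ↥E => (g : X ≃ₜ X).symm x)
        = fun g => ((eh.symm g : ↥K) : ↥E × X).2 := by
      funext g
      have h1 : ((eh.symm g : ↥K) : ↥E × X).1 = g :=
        (hehap (eh.symm g)).symm.trans (eh.apply_symm_apply g)
      have h2 : (((eh.symm g : ↥K) : ↥E × X).1 : X ≃ₜ X) ((eh.symm g : ↥K) : ↥E × X).2 = x :=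
        (eh.symm g).2
      rw [h1] at h2
      apply (g : X ≃ₜ X).injective
      rw [Homeomorph.apply_symm_apply]
      exact h2.symm
    rw [hid]
    exact continuous_snd.comp (continuous_subtype_val.comp eh.symm.continuous)
  -- normalizer characterization
  have hNchar : ∀ g : ↥E, g ∈ N ↔
      (∀ k ∈ H, (k : X ≃ₜ X) ((g : X ≃ₜ X) x) = (g : X ≃ₜ X) x) ∧
      (∀ k ∈ H, (k : X ≃ₜ X) ((g : X ≃ₜ X).symm x) = (g : X ≃ₜ X).symm x) := by
    intro g
    rw [hNdef, Subgroup.mem_normalizer_iff]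
    constructor
    · intro hg
      constructor
      · intro k hk
        have h1 : g⁻¹ * k * g ∈ H := by
          apply (hg (g⁻¹ * k * g)).2
          have hr : g * (g⁻¹ * k * g) * g⁻¹ = k := by group
          rw [hr]; exact hk
        have h2 : ((g⁻¹ * k * g : ↥E) : X ≃ₜ X) x = x := (hmemH _).1 h1
        have h3 : (g : X ≃ₜ X).symm ((k : X ≃ₜ X) ((g : X ≃ₜ X) x)) = x := h2
        have h4 := congrArg (g : X ≃ₜ X) h3
        rwa [Homeomorph.apply_symm_apply] at h4
      · intro k hk
        have h1 : g * k * g⁻¹ ∈ H := (hg k).1 hk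
        have h2 : ((g * k * g⁻¹ : ↥E) : X ≃ₜ X) x = x := (hmemH _).1 h1
        have h3 : (g : X ≃ₜ X) ((k : X ≃ₜ X) ((g : X ≃ₜ X).symm x)) = x := h2
        have h4 := congrArg (g : X ≃ₜ X).symm h3
        rwa [Homeomorph.symm_apply_apply] at h4
    · rintro ⟨hc1, hc2⟩ k
      constructor
      · intro hk
        apply (hmemH _).2
        show (g : X ≃ₜ X) ((k : X ≃ₜ X) ((g : X ≃ₜ X).symm x)) = x
        rw [hc2 k hk, Homeomorph.apply_symm_apply]
      · intro hk
        apply (hmemH _).2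
        have h1 : ((g * k * g⁻¹ : ↥E) : X ≃ₜ X) ((g : X ≃ₜ X) x) = (g : X ≃ₜ X) x :=
          hc1 (g * k * g⁻¹) hk
        have h2 : (g : X ≃ₜ X) ((k : X ≃ₜ X) ((g : X ≃ₜ X).symm ((g : X ≃ₜ X) x)))
            = (g : X ≃ₜ X) x := h1
        rw [Homeomorph.symm_apply_apply] at h2
        exact (g : X ≃ₜ X).injective h2
  -- the normalizer is closed
  have hNclosed : IsClosed (N : Set ↥E) := by
    have hNeq : (N : Set ↥E) =
        (⋂ k ∈ H, {g : ↥E | (k : X ≃ₜ X) ((g : X ≃ₜ X) x) = (g : X ≃ₜ X) x}) ∩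
        (⋂ k ∈ H, {g : ↥E | (k : X ≃ₜ X) ((g : X ≃ₜ X).symm x) = (g : X ≃ₜ X).symm x}) := by
      ext g
      simp only [SetLike.mem_coe, Set.mem_inter_iff, Set.mem_iInter, Set.mem_setOf_eq]
      exact hNchar g
    rw [hNeq]
    refine IsClosed.inter ?_ ?_
    · refine isClosed_biInter fun k hk => isClosed_eq ?_ (hev x)
      exact (k : X ≃ₜ X).continuous.comp (hev x)
    · refine isClosed_biInter fun k hk => isClosed_eq ?_ hscont
      exact (k : X ≃ₜ X).continuous.comp hscont
  -- well-definedness of the construction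
  have hwd : ∀ n ∈ N, ∀ g g' : ↥E, (g : X ≃ₜ X) x = (g' : X ≃ₜ X) x →
      (g : X ≃ₜ X) ((n : X ≃ₜ X) x) = (g' : X ≃ₜ X) ((n : X ≃ₜ X) x) := by
    intro n hn g g' hgg'
    have h1 : g'⁻¹ * g ∈ H := by
      apply (hmemH _).2
      show (g' : X ≃ₜ X).symm ((g : X ≃ₜ X) x) = x
      rw [hgg', Homeomorph.symm_apply_apply]
    have h2 : n⁻¹ * (g'⁻¹ * g) * n ∈ H := by
      have hhn := (Subgroup.mem_normalizer_iff.1 hn) (n⁻¹ * (g'⁻¹ * g) * n)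
      apply hhn.2
      have hr : n * (n⁻¹ * (g'⁻¹ * g) * n) * n⁻¹ = g'⁻¹ * g := by group
      rw [hr]; exact h1
    have h3 : (n : X ≃ₜ X).symm ((g' : X ≃ₜ X).symm ((g : X ≃ₜ X) ((n : X ≃ₜ X) x))) = x :=
      (hmemH _).1 h2
    have h4 := congrArg (n : X ≃ₜ X) h3
    rw [Homeomorph.apply_symm_apply] at h4
    have h5 := congrArg (g' : X ≃ₜ X) h4
    rwa [Homeomorph.apply_symm_apply] at h5
  -- the candidate automorphisms
  set f : ↥E → X → X := fun n y => (σ y : X ≃ₜ X) ((n : X ≃ₜ X) x) with hfdef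
  have hfwd : ∀ n ∈ N, ∀ (g : ↥E) (y : X), (g : X ≃ₜ X) x = y →
      f n y = (g : X ≃ₜ X) ((n : X ≃ₜ X) x) := by
    intro n hn g y hg
    exact hwd n hn (σ y) g (by rw [hσ y, hg])
  have hfΦ : ∀ n ∈ N, ∀ (g₀ : G) (y : X), f n (Φ g₀ y) = Φ g₀ (f n y) := by
    intro n hn g₀ y
    have h1 : (((⟨Φ g₀, hΦE g₀⟩ : ↥E) * σ y : ↥E) : X ≃ₜ X) x = Φ g₀ y := by
      show Φ g₀ ((σ y : X ≃ₜ X) x) = Φ g₀ y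
      rw [hσ y]
    rw [hfwd n hn _ _ h1]
    rfl
  have hfcont : ∀ n ∈ N, Continuous (f n) := by
    intro n hn
    have hq : IsQuotientMap π := IsQuotientMap.of_surjective_continuous hπsurj hπc
    rw [hq.continuous_iff]
    have hr : f n ∘ π = fun g : ↥E => (g : X ≃ₜ X) ((n : X ≃ₜ X) x) :=
      funext fun g => hfwd n hn g (π g) rfl
    rw [hr]
    exact hev ((n : X ≃ₜ X) x)
  have hfinv : ∀ n ∈ N, ∀ y, f n (f n⁻¹ y) = y := by
    intro n hn y
    have h1 : ((σ y * n⁻¹ : ↥E) : X ≃ₜ X) x = f n⁻¹ y := rfl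
    rw [hfwd n hn (σ y * n⁻¹) (f n⁻¹ y) h1]
    show (σ y : X ≃ₜ X) ((n : X ≃ₜ X).symm ((n : X ≃ₜ X) x)) = y
    rw [Homeomorph.symm_apply_apply]
    exact hσ y
  have hauto : ∀ n ∈ N, ∃ a : ↥(autGroup Φ), ∀ y, (a : X ≃ₜ X) y = f n y := by
    intro n hn
    have hn' : n⁻¹ ∈ N := N.inv_mem hn
    refine ⟨⟨{ toFun := f n
               invFun := f n⁻¹
               left_inv := fun y => by
                 have := hfinv n⁻¹ hn' y
                 rwa [inv_inv] at this
               right_inv := hfinv n hn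
               continuous_toFun := hfcont n hn
               continuous_invFun := hfcont n⁻¹ hn' }, ?_⟩, fun y => rfl⟩
    exact fun g₀ y => hfΦ n hn g₀ y
  -- automorphisms commute with all of E
  have hcomm : ∀ (a : ↥(autGroup Φ)) (g : ↥E) (z : X),
      (a : X ≃ₜ X) ((g : X ≃ₜ X) z) = (g : X ≃ₜ X) ((a : X ≃ₜ X) z) := by
    intro a g z
    have hC : IsClosed {h : X ≃ₜ X | ∀ w, (a : X ≃ₜ X) (h w) = h ((a : X ≃ₜ X) w)} := by
      have hrw : {h : X ≃ₜ X | ∀ w, (a : X ≃ₜ X) (h w) = h ((a : X ≃ₜ X) w)} =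
          ⋂ w, {h : X ≃ₜ X | (a : X ≃ₜ X) (h w) = h ((a : X ≃ₜ X) w)} := by
        ext h; simp [Set.mem_iInter]
      rw [hrw]
      exact isClosed_iInter fun w => isClosed_eq
        ((a : X ≃ₜ X).continuous.comp (hev0 w)) (hev0 ((a : X ≃ₜ X) w))
    have hsub : (E : Set (X ≃ₜ X)) ⊆
        {h : X ≃ₜ X | ∀ w, (a : X ≃ₜ X) (h w) = h ((a : X ≃ₜ X) w)} := by
      rw [hE]
      apply closure_minimal ?_ hC
      rintro _ ⟨g₀, rfl⟩ w
      exact a.2 g₀ w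
    exact hsub g.2 z
  -- the image of x under an automorphism comes from the normalizer
  have hnorm : ∀ a : ↥(autGroup Φ), σ ((a : X ≃ₜ X) x) ∈ N := by
    have p1 : ∀ (a' : ↥(autGroup Φ)) (g' : ↥E), (g' : X ≃ₜ X) x = (a' : X ≃ₜ X) x →
        ∀ k ∈ H, g'⁻¹ * k * g' ∈ H := by
      intro a' g' hg' k hk
      apply (hmemH _).2
      show (g' : X ≃ₜ X).symm ((k : X ≃ₜ X) ((g' : X ≃ₜ X) x)) = x
      rw [hg']
      have hkx : (k : X ≃ₜ X) x = x := (hmemH _).1 hk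
      have h1 : (k : X ≃ₜ X) ((a' : X ≃ₜ X) x) = (a' : X ≃ₜ X) x := by
        have h2 := hcomm a' k x
        rw [hkx] at h2
        exact h2.symm
      rw [h1, ← hg', Homeomorph.symm_apply_apply]
    intro a
    set b : ↥(autGroup Φ) := a⁻¹ with hbdef
    set ec : ↥E := σ ((a : X ≃ₜ X) x) with hecdef
    set ec' : ↥E := σ ((b : X ≃ₜ X) x) with hecdef'
    have hce : (ec : X ≃ₜ X) x = (a : X ≃ₜ X) x := hσ _
    have hce' : (ec' : X ≃ₜ X) x = (b : X ≃ₜ X) x := hσ _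
    have h1 := p1 a ec hce
    have h2 := p1 b ec' hce'
    have hmem : ec' * ec ∈ H := by
      apply (hmemH _).2
      show (ec' : X ≃ₜ X) ((ec : X ≃ₜ X) x) = x
      rw [hce]
      have h3 : (a : X ≃ₜ X) ((ec' : X ≃ₜ X) x) = (ec' : X ≃ₜ X) ((a : X ≃ₜ X) x) :=
        hcomm a ec' x
      have h4 : (a : X ≃ₜ X) ((ec' : X ≃ₜ X) x) = x := by
        rw [hce']
        show (a : X ≃ₜ X) ((a : X ≃ₜ X).symm x) = x
        exact (a : X ≃ₜ X).apply_symm_apply x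
      rw [← h3, h4]
    rw [Subgroup.mem_normalizer_iff]
    intro k
    constructor
    · intro hk
      have hrw : ec * k * ec⁻¹ = ec'⁻¹ * ((ec' * ec) * k * (ec' * ec)⁻¹) * ec' := by group
      rw [hrw]
      apply h2
      exact H.mul_mem (H.mul_mem hmem hk) (H.inv_mem hmem)
    · intro hk
      have h5 := h1 (ec * k * ec⁻¹) hk
      have hrw : ec⁻¹ * (ec * k * ec⁻¹) * ec = k := by group
      rwa [hrw] at h5
  -- orbit description
  have horb : ∀ g : ↥E, MulAction.orbit ↥(autGroup Φ) ((g : X ≃ₜ X) x)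
      = (fun n : ↥E => ((g * n : ↥E) : X ≃ₜ X) x) '' (N : Set ↥E) := by
    intro g
    ext z
    constructor
    · rintro ⟨a, rfl⟩
      refine ⟨σ ((a : X ≃ₜ X) x), hnorm a, ?_⟩
      show (g : X ≃ₜ X) ((σ ((a : X ≃ₜ X) x) : X ≃ₜ X) x) = a • ((g : X ≃ₜ X) x)
      rw [hσ]
      show (g : X ≃ₜ X) ((a : X ≃ₜ X) x) = (a : X ≃ₜ X) ((g : X ≃ₜ X) x)
      exact (hcomm a g x).symm
    · rintro ⟨n, hn, rfl⟩
      obtain ⟨a, ha⟩ := hauto n hn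
      refine ⟨a, ?_⟩
      show (a : X ≃ₜ X) ((g : X ≃ₜ X) x) = ((g * n : ↥E) : X ≃ₜ X) x
      rw [ha]
      exact hfwd n hn g ((g : X ≃ₜ X) x) rfl
  -- orbits are closed
  have hScl : ∀ g : ↥E, IsClosed ((fun n : ↥E => ((g * n : ↥E) : X ≃ₜ X) x) '' (N : Set ↥E)) := by
    intro g
    have hc : Continuous (fun n : ↥E => ((g * n : ↥E) : X ≃ₜ X) x) := by
      show Continuous (fun n : ↥E => (g : X ≃ₜ X) ((n : X ≃ₜ X) x))
      exact (g : X ≃ₜ X).continuous.comp (hev x)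
    exact (hNclosed.isCompact.image hc).isClosed
  -- finiteness of the quotient
  haveI hfinq : Finite (↥E ⧸ N) := by
    apply Nat.finite_of_card_ne_zero
    rw [← Subgroup.index_eq_card]
    exact hfi.index_ne_zero
  have hqeq : ∀ g g' : ↥E, (g : X ≃ₜ X) x = (g' : X ≃ₜ X) x →
      (QuotientGroup.mk g : ↥E ⧸ N) = QuotientGroup.mk g' := by
    intro g g' h
    rw [QuotientGroup.eq]
    apply Subgroup.le_normalizer
    apply (hmemH _).2
    show (g : X ≃ₜ X).symm ((g' : X ≃ₜ X) x) = x
    rw [← h, Homeomorph.symm_apply_apply]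
  set q : X → ↥E ⧸ N := fun z => QuotientGroup.mk (σ z) with hqdef
  have hfiber : ∀ z : X, MulAction.orbit ↥(autGroup Φ) z = q ⁻¹' {q z} := by
    intro z
    have hz : (σ z : X ≃ₜ X) x = z := hσ z
    have horb' := horb (σ z)
    rw [hz] at horb'
    rw [horb']
    ext w
    simp only [Set.mem_preimage, Set.mem_singleton_iff]
    constructor
    · rintro ⟨n, hn, rfl⟩
      have h1 : q (((σ z * n : ↥E) : X ≃ₜ X) x) = QuotientGroup.mk (σ z * n) :=
        hqeq _ _ (hσ _)
      rw [h1]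
      show (QuotientGroup.mk (σ z * n) : ↥E ⧸ N) = QuotientGroup.mk (σ z)
      rw [QuotientGroup.eq]
      have hrw : (σ z * n)⁻¹ * σ z = n⁻¹ := by group
      rw [hrw]
      exact N.inv_mem hn
    · intro hw
      have h1 : (QuotientGroup.mk (σ w) : ↥E ⧸ N) = QuotientGroup.mk (σ z) := hw
      rw [QuotientGroup.eq] at h1
      have h2 : (σ z)⁻¹ * σ w ∈ N := by
        have h3 := N.inv_mem h1
        have hrw : ((σ w)⁻¹ * σ z)⁻¹ = (σ z)⁻¹ * σ w := by group
        rwa [hrw] at h3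
      refine ⟨(σ z)⁻¹ * σ w, h2, ?_⟩
      show ((σ z * ((σ z)⁻¹ * σ w) : ↥E) : X ≃ₜ X) x = w
      have hrw : σ z * ((σ z)⁻¹ * σ w) = σ w := by group
      rw [hrw]
      exact hσ w
  -- each fiber of q is closed
  have hfibercl : ∀ c : ↥E ⧸ N, IsClosed (q ⁻¹' {c}) := by
    intro c
    obtain ⟨g₀, rfl⟩ := QuotientGroup.mk_surjective c
    have h1 : q ((g₀ : X ≃ₜ X) x) = QuotientGroup.mk g₀ := hqeq _ _ (hσ _)
    rw [← h1, ← hfiber ((g₀ : X ≃ₜ X) x), horb g₀]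
    exact hScl g₀
  -- conclusion
  intro y
  constructor
  · rw [hfiber y]
    exact hfibercl (q y)
  · rw [hfiber y]
    rw [← isClosed_compl_iff, ← Set.preimage_compl]
    have hrw : ({q y}ᶜ : Set (↥E ⧸ N)) = ⋃ c ∈ ({q y}ᶜ : Set (↥E ⧸ N)), {c} := by
      ext c
      simp
    rw [hrw, Set.preimage_iUnion₂]
    exact Set.Finite.isClosed_biUnion (Set.toFinite _) fun c _ => hfibercl c

end CantorChains
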